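/- Let Y, ŶH, ŶM be {0,1}-valued random variables with error events E_H = {ŶH ≠ Y}, E_M = {ŶM ≠ Y}, error rates 0 < e_H < 1 and 0 < e_M < 1, error-indicator correlation ρ = Corr(1_{E_H}, 1_{E_M}), e* = min(e_H, e_M) and a* = max(1 − e_H, 1 − e_M). If ρ ≥ (e* − e_H·e_M)/√(e_H(1−e_H)·e_M(1−e_M)), then no selector achieves complementarity: every {H,M}-valued selector S satisfies P(Ŷ_S = Y) ≤ a*. -/

import Mathlib

open MeasureTheory ProbabilityTheory

/-- The two agents: human `H` and machine `M`. -/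
inductive Agent : Type
  | H : Agent
  | M : Agent
  deriving DecidableEq

instance : MeasurableSpace Agent := ⊤

/-- The team prediction of a selector `S`: it equals `ŶH` on `{S = H}` and `ŶM` on `{S = M}`. -/
def teamPred {Ω : Type*} (YH YM : Ω → Bool) (S : Ω → Agent) (ω : Ω) : Bool :=
  match S ω with
  | Agent.H => YH ω
  | Agent.M => YM ω

/-- **Impossibility of complementarity.** With error rates `e_H, e_M ∈ (0,1)`,
error-indicator correlation `ρ`, `e* = min(e_H, e_M)` and `a* = max(1−e_H, 1−e_M)`:
if `ρ ≥ (e* − e_H·e_M)/√(e_H(1−e_H)·e_M(1−e_M))`, then no selector achieves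
complementarity: every selector `S` satisfies `P(Ŷ_S = Y) ≤ a*`. -/
theorem impossibility_of_complementarity
    {Ω : Type*} [MeasureSpace Ω] [IsProbabilityMeasure (ℙ : Measure Ω)]
    (Y YH YM : Ω → Bool) (hY : Measurable Y) (hYH : Measurable YH) (hYM : Measurable YM)
    (EH EM : Set Ω) (hEHdef : EH = {ω | YH ω ≠ Y ω}) (hEMdef : EM = {ω | YM ω ≠ Y ω})
    (eH eM : ℝ) (heH : eH = (ℙ EH).toReal) (heM : eM = (ℙ EM).toReal)
    (heH0 : 0 < eH) (heH1 : eH < 1) (heM0 : 0 < eM) (heM1 : eM < 1)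
    (ρ : ℝ)
    (hρ : ρ = ((∫ ω, (EH.indicator (fun _ => (1 : ℝ)) ω) * (EM.indicator (fun _ => (1 : ℝ)) ω) ∂ℙ)
        - eH * eM) / (Real.sqrt (eH * (1 - eH)) * Real.sqrt (eM * (1 - eM))))
    (hthresh : ρ ≥ (min eH eM - eH * eM) / Real.sqrt (eH * (1 - eH) * (eM * (1 - eM)))) :
    ∀ S : Ω → Agent, Measurable S →
      (ℙ {ω | teamPred YH YM S ω = Y ω}).toReal ≤ max (1 - eH) (1 - eM) := by
  intro S hS
  -- measurability of EH, EM
  have hEH : MeasurableSet EH := by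
    rw [hEHdef]
    exact (measurableSet_eq_fun hYH hY).compl
  have hEM : MeasurableSet EM := by
    rw [hEMdef]
    exact (measurableSet_eq_fun hYM hY).compl
  set p : ℝ := (ℙ (EH ∩ EM)).toReal with hp
  have hint : (∫ ω, (EH.indicator (fun _ => (1 : ℝ)) ω) * (EM.indicator (fun _ => (1 : ℝ)) ω) ∂ℙ)
      = p := by
    have : (fun ω => (EH.indicator (fun _ => (1 : ℝ)) ω) * (EM.indicator (fun _ => (1 : ℝ)) ω))
        = (EH ∩ EM).indicator (fun _ => (1 : ℝ)) := by
      funext ω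
      by_cases h1 : ω ∈ EH <;> by_cases h2 : ω ∈ EM <;>
        simp [Set.indicator, h1, h2]
    rw [this]
    exact MeasureTheory.integral_indicator_one (hEH.inter hEM) (μ := ℙ)
  -- positivity of denominators
  have haH : 0 < eH * (1 - eH) := by nlinarith
  have haM : 0 < eM * (1 - eM) := by nlinarith
  have hD : Real.sqrt (eH * (1 - eH)) * Real.sqrt (eM * (1 - eM))
      = Real.sqrt (eH * (1 - eH) * (eM * (1 - eM))) := by
    rw [Real.sqrt_mul haH.le]
  have hDpos : 0 < Real.sqrt (eH * (1 - eH) * (eM * (1 - eM))) :=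
    Real.sqrt_pos.mpr (by positivity)
  -- p ≥ min eH eM
  have hpmin : min eH eM ≤ p := by
    rw [hρ, hint, hD, ge_iff_le, div_le_div_iff₀ hDpos hDpos] at hthresh
    nlinarith
  -- success set is inside complement of EH ∩ EM
  have hsub : {ω | teamPred YH YM S ω = Y ω} ⊆ (EH ∩ EM)ᶜ := by
    intro ω hω
    rintro ⟨h1, h2⟩
    rw [hEHdef] at h1; rw [hEMdef] at h2
    have : teamPred YH YM S ω ≠ Y ω := by
      unfold teamPred
      cases S ω <;> assumption
    exact this hω
  have hle : ℙ {ω | teamPred YH YM S ω = Y ω} ≤ ℙ ((EH ∩ EM)ᶜ) := measure_mono hsub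
  have hcompl : (ℙ ((EH ∩ EM)ᶜ)).toReal = 1 - p := by
    rw [measure_compl (hEH.inter hEM) (measure_ne_top _ _)]
    rw [ENNReal.toReal_sub_of_le (measure_mono (Set.subset_univ _)) (measure_ne_top _ _)]
    simp [hp]
  have h1 : (ℙ {ω | teamPred YH YM S ω = Y ω}).toReal ≤ 1 - p := by
    rw [← hcompl]
    exact ENNReal.toReal_mono (measure_ne_top _ _) hle
  have hfin : 1 - p ≤ max (1 - eH) (1 - eM) := by
    cases' le_total eH eM with hc hc
    · rw [min_eq_left hc] at hpmin
      exact le_trans (by linarith) (le_max_left (1 - eH) (1 - eM))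
    · rw [min_eq_right hc] at hpmin
      exact le_trans (by linarith) (le_max_right (1 - eH) (1 - eM))
  linarith
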